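/- arXiv:1311.4245 — 2 statements merged into one kernel-verified Lean document; each statement's English description precedes it below -/
import Mathlib

section
/- Under the semi-discrete flow, the angle κ_n satisfies the semi-discrete mKdV equation dκ_n/dt = (1/a)·(tan(κ_{n+1}/2) − tan(κ_{n−1}/2)). -/
open Matrix

noncomputable section

/-- Euclidean inner product on ℝ³ (written as `Fin 3 → ℝ`). -/
def dot3 (x y : Fin 3 → ℝ) : ℝ := x 0 * y 0 + x 1 * y 1 + x 2 * y 2

/-- Cross product on ℝ³. -/
def cross3 (x y : Fin 3 → ℝ) : Fin 3 → ℝ :=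
  ![x 1 * y 2 - x 2 * y 1, x 2 * y 0 - x 0 * y 2, x 0 * y 1 - x 1 * y 0]

/-- Euclidean norm on ℝ³. -/
def norm3 (x : Fin 3 → ℝ) : ℝ := Real.sqrt (dot3 x x)

/-- Tangent vector T_n = (γ_{n+1} − γ_n)/|γ_{n+1} − γ_n| of a discrete space curve. -/
def dT (γ : ℤ → Fin 3 → ℝ) (n : ℤ) : Fin 3 → ℝ :=
  (norm3 (γ (n + 1) - γ n))⁻¹ • (γ (n + 1) - γ n)

/-- Binormal vector B_n = (T_{n−1} × T_n)/|T_{n−1} × T_n|. -/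
def dB (γ : ℤ → Fin 3 → ℝ) (n : ℤ) : Fin 3 → ℝ :=
  (norm3 (cross3 (dT γ (n - 1)) (dT γ n)))⁻¹ • cross3 (dT γ (n - 1)) (dT γ n)

/-- Principal normal vector N_n = B_n × T_n. -/
def dN (γ : ℤ → Fin 3 → ℝ) (n : ℤ) : Fin 3 → ℝ := cross3 (dB γ n) (dT γ n)

lemma d_comm (x y : Fin 3 → ℝ) : dot3 x y = dot3 y x := by unfold dot3; ring
lemma d_smul_l (r : ℝ) (x y : Fin 3 → ℝ) : dot3 (r • x) y = r * dot3 x y := by simp [dot3]; ring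
lemma d_smul_r (r : ℝ) (x y : Fin 3 → ℝ) : dot3 x (r • y) = r * dot3 x y := by simp [dot3]; ring
lemma d_sub_l (x y z : Fin 3 → ℝ) : dot3 (x - y) z = dot3 x z - dot3 y z := by simp [dot3]; ring
lemma d_sub_r (x y z : Fin 3 → ℝ) : dot3 x (y - z) = dot3 x y - dot3 x z := by simp [dot3]; ring
lemma d_add_l (x y z : Fin 3 → ℝ) : dot3 (x + y) z = dot3 x z + dot3 y z := by simp [dot3]; ring
lemma d_add_r (x y z : Fin 3 → ℝ) : dot3 x (y + z) = dot3 x y + dot3 x z := by simp [dot3]; ring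
lemma c_smul_l (r : ℝ) (x y : Fin 3 → ℝ) : cross3 (r • x) y = r • cross3 x y := by
  funext i; fin_cases i <;> simp [cross3] <;> ring
lemma ccross (x y : Fin 3 → ℝ) :
    cross3 (cross3 x y) y = dot3 x y • y - dot3 y y • x := by
  funext i; fin_cases i <;> simp [cross3, dot3] <;> ring
lemma lagr (x y z w : Fin 3 → ℝ) :
    dot3 (cross3 x y) (cross3 z w) = dot3 x z * dot3 y w - dot3 x w * dot3 y z := by
  simp [cross3, dot3]; ring
lemma trip_rot (x y z : Fin 3 → ℝ) : dot3 (cross3 x y) z = dot3 (cross3 y z) x := by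
  simp [cross3, dot3]; ring
lemma trip_zero_l (x y : Fin 3 → ℝ) : dot3 (cross3 x y) x = 0 := by simp [cross3, dot3]; ring
lemma trip_zero_r (x y : Fin 3 → ℝ) : dot3 (cross3 x y) y = 0 := by simp [cross3, dot3]; ring
lemma dot3_self_nonneg (x : Fin 3 → ℝ) : 0 ≤ dot3 x x := by
  unfold dot3; nlinarith [sq_nonneg (x 0), sq_nonneg (x 1), sq_nonneg (x 2)]
lemma tan_half_sin {x : ℝ} (h0 : 0 < x) (hπ : x < Real.pi) :
    Real.tan (x / 2) * Real.sin x = 1 - Real.cos x := by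
  have hc : 0 < Real.cos (x / 2) := by
    apply Real.cos_pos_of_mem_Ioo; constructor <;> [linarith; linarith]
  have h2 : Real.sin x = 2 * Real.sin (x / 2) * Real.cos (x / 2) := by
    rw [← Real.sin_two_mul]; ring_nf
  have h3 : Real.cos x = 2 * Real.cos (x / 2) ^ 2 - 1 := by
    rw [← Real.cos_two_mul]; ring_nf
  have hp := Real.sin_sq_add_cos_sq (x / 2)
  rw [Real.tan_eq_sin_div_cos, h2, h3]
  field_simp
  nlinarith [hp]


/-- Under the semi-discrete flow, the angle κ_n satisfies the semi-discrete mKdV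
equation dκ_n/dt = (1/a)(tan(κ_{n+1}/2) − tan(κ_{n−1}/2)). -/
theorem statement10
    (γ : ℝ → ℤ → Fin 3 → ℝ) (ε ν : ℝ → ℝ) (κ : ℝ → ℤ → ℝ) (a : ℝ → ℝ)
    (hcurve : ∀ t n, ¬ Collinear ℝ ({γ t (n - 1), γ t n, γ t (n + 1)} : Set (Fin 3 → ℝ)))
    (hε : ∀ t n, norm3 (γ t (n + 1) - γ t n) = ε t)
    (hν : ∀ t, ν t ∈ Set.Ico (-Real.pi) Real.pi)
    (hνcos : ∀ t n, dot3 (dB (γ t) n) (dB (γ t) (n - 1)) = Real.cos (ν t))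
    (hνsin : ∀ t n, dot3 (dB (γ t) n) (dN (γ t) (n - 1)) = Real.sin (ν t))
    (hκ : ∀ t n, κ t n ∈ Set.Ioo 0 Real.pi)
    (hκcos : ∀ t n, dot3 (dT (γ t) n) (dT (γ t) (n - 1)) = Real.cos (κ t n))
    (ha : ∀ t, a t = (1 + Real.tan (ν t / 2) ^ 2) * ε t)
    (hflow : ∀ t n, HasDerivAt (fun s => γ s n)
      ((ε t / a t) • (Real.cos (ν t) • dT (γ t) n
        - (Real.cos (ν t) * Real.tan (κ t n / 2)) • dN (γ t) n
        + (Real.sin (ν t) * Real.tan (κ t n / 2)) • dB (γ t) n)) t) :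
    ∀ t n, HasDerivAt (fun s => κ s n)
      ((1 / a t) * (Real.tan (κ t (n + 1) / 2) - Real.tan (κ t (n - 1) / 2))) t := by
  intro t n
  -- positivity of ε t
  have epos : 0 < ε t := by
    rw [← hε t n]
    have hne : γ t (n + 1) - γ t n ≠ 0 := by
      intro h
      apply hcurve t n
      have heq : γ t (n + 1) = γ t n := sub_eq_zero.mp h
      have hsub : ({γ t (n - 1), γ t n, γ t (n + 1)} : Set (Fin 3 → ℝ)) ⊆
          {γ t (n - 1), γ t n} := by
        rw [heq]; intro x hx
        simp only [Set.mem_insert_iff, Set.mem_singleton_iff] at hx ⊢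
        tauto
      exact (collinear_pair ℝ _ _).subset hsub
    have hdpos : 0 < dot3 (γ t (n + 1) - γ t n) (γ t (n + 1) - γ t n) := by
      rcases Function.ne_iff.mp hne with ⟨i, hi⟩
      unfold dot3
      fin_cases i <;>
        simp only [Fin.zero_eta, Fin.mk_one, Pi.zero_apply, Fin.isValue,
          show (⟨2, by omega⟩ : Fin 3) = (2 : Fin 3) from rfl] at hi <;>
        nlinarith [mul_self_nonneg ((γ t (n + 1) - γ t n) 0),
          mul_self_nonneg ((γ t (n + 1) - γ t n) 1),
          mul_self_nonneg ((γ t (n + 1) - γ t n) 2), mul_self_pos.mpr hi]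
    unfold norm3
    exact Real.sqrt_pos.mpr hdpos
  have ene : ε t ≠ 0 := ne_of_gt epos
  have hdot_self : ∀ m : ℤ, dot3 (γ t (m + 1) - γ t m) (γ t (m + 1) - γ t m) = ε t ^ 2 := by
    intro m
    have h1 := hε t m
    unfold norm3 at h1
    have h2 := dot3_self_nonneg (γ t (m + 1) - γ t m)
    nlinarith [Real.sq_sqrt h2, h1]
  have hT_eq : ∀ m : ℤ, dT (γ t) m = (ε t)⁻¹ • (γ t (m + 1) - γ t m) := by
    intro m; unfold dT; rw [hε t m]
  have hTT : ∀ m : ℤ, dot3 (dT (γ t) m) (dT (γ t) m) = 1 := by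
    intro m
    rw [hT_eq m, d_smul_l, d_smul_r, hdot_self m]
    field_simp
  have hcos : ∀ m : ℤ, dot3 (dT (γ t) m) (dT (γ t) (m - 1)) = Real.cos (κ t m) := hκcos t
  have hcos' : ∀ m : ℤ, dot3 (dT (γ t) (m - 1)) (dT (γ t) m) = Real.cos (κ t m) := by
    intro m; rw [d_comm]; exact hcos m
  have hcosS : ∀ m : ℤ, dot3 (dT (γ t) (m + 1)) (dT (γ t) m) = Real.cos (κ t (m + 1)) := by
    intro m; have h := hcos (m + 1); rwa [show m + 1 - 1 = m from by ring] at h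
  have hcosS' : ∀ m : ℤ, dot3 (dT (γ t) m) (dT (γ t) (m + 1)) = Real.cos (κ t (m + 1)) := by
    intro m; rw [d_comm]; exact hcosS m
  have sinpos : ∀ m : ℤ, 0 < Real.sin (κ t m) := fun m =>
    Real.sin_pos_of_pos_of_lt_pi (hκ t m).1 (hκ t m).2
  have sne : ∀ m : ℤ, Real.sin (κ t m) ≠ 0 := fun m => ne_of_gt (sinpos m)
  have hpy : ∀ m : ℤ, Real.sin (κ t m) ^ 2 + Real.cos (κ t m) ^ 2 = 1 := fun m =>
    Real.sin_sq_add_cos_sq _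
  have hpyν : Real.sin (ν t) ^ 2 + Real.cos (ν t) ^ 2 = 1 := Real.sin_sq_add_cos_sq _
  have htan : ∀ m : ℤ, Real.tan (κ t m / 2) * Real.sin (κ t m) = 1 - Real.cos (κ t m) :=
    fun m => tan_half_sin (hκ t m).1 (hκ t m).2
  have hcross2 : ∀ m : ℤ, dot3 (cross3 (dT (γ t) (m - 1)) (dT (γ t) m))
      (cross3 (dT (γ t) (m - 1)) (dT (γ t) m)) = Real.sin (κ t m) ^ 2 := by
    intro m
    rw [lagr, hTT (m - 1), hTT m, hcos' m, hcos m]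
    linear_combination (-1 : ℝ) * hpy m
  have hcrossnorm : ∀ m : ℤ, norm3 (cross3 (dT (γ t) (m - 1)) (dT (γ t) m)) =
      Real.sin (κ t m) := by
    intro m; unfold norm3; rw [hcross2 m]; exact Real.sqrt_sq (sinpos m).le
  have hB : ∀ m : ℤ, dB (γ t) m =
      (Real.sin (κ t m))⁻¹ • cross3 (dT (γ t) (m - 1)) (dT (γ t) m) := by
    intro m; unfold dB; rw [hcrossnorm m]
  have hN : ∀ m : ℤ, dN (γ t) m =
      (Real.sin (κ t m))⁻¹ • (Real.cos (κ t m) • dT (γ t) m - dT (γ t) (m - 1)) := by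
    intro m
    unfold dN
    rw [hB m, c_smul_l, ccross, hcos' m, hTT m, one_smul]
  -- torsion-angle consequences
  have hP : ∀ m : ℤ, dot3 (dT (γ t) (m + 1)) (dT (γ t) (m - 1)) =
      Real.cos (κ t m) * Real.cos (κ t (m + 1))
        - Real.cos (ν t) * Real.sin (κ t m) * Real.sin (κ t (m + 1)) := by
    intro m
    have h := hνcos t (m + 1)
    rw [show m + 1 - 1 = m from by ring] at h
    rw [hB (m + 1), hB m] at h
    rw [show m + 1 - 1 = m from by ring] at h
    rw [d_smul_l, d_smul_r, lagr, hcos m, hTT m, hcosS m] at h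
    field_simp [sne m, sne (m + 1)] at h
    linarith [h]
  have hD : ∀ m : ℤ, dot3 (cross3 (dT (γ t) m) (dT (γ t) (m + 1))) (dT (γ t) (m - 1)) =
      -(Real.sin (ν t) * Real.sin (κ t m) * Real.sin (κ t (m + 1))) := by
    intro m
    have h := hνsin t (m + 1)
    rw [show m + 1 - 1 = m from by ring] at h
    rw [hB (m + 1), hN m] at h
    rw [show m + 1 - 1 = m from by ring] at h
    rw [d_smul_l, d_smul_r, d_sub_r, d_smul_r, trip_zero_l] at h
    field_simp [sne m, sne (m + 1)] at h
    linarith [h]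
  have hPpred : ∀ m : ℤ, dot3 (dT (γ t) m) (dT (γ t) (m - 2)) =
      Real.cos (κ t (m - 1)) * Real.cos (κ t m)
        - Real.cos (ν t) * Real.sin (κ t (m - 1)) * Real.sin (κ t m) := by
    intro m
    have h := hP (m - 1)
    rwa [show m - 1 + 1 = m from by ring, show m - 1 - 1 = m - 2 from by ring] at h
  have hPpred' : ∀ m : ℤ, dot3 (dT (γ t) (m - 2)) (dT (γ t) m) =
      Real.cos (κ t (m - 1)) * Real.cos (κ t m)
        - Real.cos (ν t) * Real.sin (κ t (m - 1)) * Real.sin (κ t m) := by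
    intro m; rw [d_comm]; exact hPpred m
  have hDpred : ∀ m : ℤ, dot3 (cross3 (dT (γ t) (m - 2)) (dT (γ t) (m - 1))) (dT (γ t) m) =
      -(Real.sin (ν t) * Real.sin (κ t (m - 1)) * Real.sin (κ t m)) := by
    intro m
    rw [trip_rot]
    have h := hD (m - 1)
    rwa [show m - 1 + 1 = m from by ring, show m - 1 - 1 = m - 2 from by ring] at h
  -- the flow field
  set V : ℤ → Fin 3 → ℝ := fun m => (ε t / a t) • (Real.cos (ν t) • dT (γ t) m
      - (Real.cos (ν t) * Real.tan (κ t m / 2)) • dN (γ t) m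
      + (Real.sin (ν t) * Real.tan (κ t m / 2)) • dB (γ t) m) with hV_def
  have hflow' : ∀ m : ℤ, HasDerivAt (fun s => γ s m) (V m) t := fun m => hflow t m
  have hApos : 0 < a t := by
    rw [ha t]
    have h1 : (0:ℝ) < 1 + Real.tan (ν t / 2) ^ 2 := by positivity
    exact mul_pos h1 epos
  have hAne : a t ≠ 0 := ne_of_gt hApos
  -- key inner products with the flow field
  have hVself : ∀ m : ℤ, dot3 (V m) (dT (γ t) m) = ε t / a t * Real.cos (ν t) := by
    intro m
    simp only [hV_def]
    rw [hN m, hB m]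
    simp only [d_smul_l, d_add_l, d_sub_l, d_smul_l]
    rw [hTT m, hcos' m, trip_zero_r]
    field_simp [sne m]
    ring
  have hVnext : ∀ m : ℤ, dot3 (V (m + 1)) (dT (γ t) m) = ε t / a t * Real.cos (ν t) := by
    intro m
    simp only [hV_def]
    rw [hN (m + 1), hB (m + 1)]
    rw [show m + 1 - 1 = m from by ring]
    simp only [d_smul_l, d_add_l, d_sub_l, d_smul_l]
    rw [hcosS m, hTT m, trip_zero_l]
    have h1 := htan (m + 1)
    have h2 := hpy (m + 1)
    field_simp [sne (m + 1)]
    linear_combination (Real.cos (ν t) * Real.sin (κ t (m + 1))) * h1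
      - (Real.cos (ν t) * Real.tan (κ t (m + 1) / 2)) * h2
  have hVnextprev : ∀ m : ℤ, dot3 (V (m + 1)) (dT (γ t) (m - 1)) =
      ε t / a t * (Real.cos (ν t) * Real.cos (κ t m)
        - Real.tan (κ t (m + 1) / 2) * Real.sin (κ t m)) := by
    intro m
    simp only [hV_def]
    rw [hN (m + 1), hB (m + 1)]
    rw [show m + 1 - 1 = m from by ring]
    simp only [d_smul_l, d_add_l, d_sub_l, d_smul_l]
    rw [hP m, hcos m, hD m]
    have h1 := htan (m + 1)
    have h2 := hpy (m + 1)
    have h3 := hpyν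
    field_simp [sne (m + 1)]
    linear_combination ((Real.cos (ν t)) ^ 2 * Real.sin (κ t m)
        * (Real.cos (κ t (m + 1)) + 1)
        + Real.cos (ν t) * Real.cos (κ t m) * Real.sin (κ t (m + 1))) * h1
      - ((Real.cos (ν t)) ^ 2 * Real.sin (κ t m)
        + Real.cos (ν t) * Real.cos (κ t m) * Real.tan (κ t (m + 1) / 2)) * h2
      - (Real.tan (κ t (m + 1) / 2) * Real.sin (κ t m) * Real.sin (κ t (m + 1))) * h3
  have hVprev : ∀ m : ℤ, dot3 (V (m - 1)) (dT (γ t) m) =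
      ε t / a t * (Real.cos (ν t) * Real.cos (κ t m)
        - Real.tan (κ t (m - 1) / 2) * Real.sin (κ t m)) := by
    intro m
    simp only [hV_def]
    rw [hN (m - 1), hB (m - 1)]
    rw [show m - 1 - 1 = m - 2 from by ring]
    simp only [d_smul_l, d_add_l, d_sub_l, d_smul_l]
    rw [hcos' m, hPpred' m, hDpred m]
    have h3 := hpyν
    field_simp [sne (m - 1)]
    linear_combination (-(Real.tan (κ t (m - 1) / 2) * Real.sin (κ t m)
      * Real.sin (κ t (m - 1)))) * h3
  -- derivative of γ differences
  have hgd : ∀ m : ℤ, HasDerivAt (fun s => γ s (m + 1) - γ s m) (V (m + 1) - V m) t :=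
    fun m => (hflow' (m + 1)).sub (hflow' m)
  -- ε is constant in t
  have hQ0 : dot3 (γ t (n + 1) - γ t n) (V (n + 1) - V n) = 0 := by
    have h1 : γ t (n + 1) - γ t n = ε t • dT (γ t) n := by
      rw [hT_eq n, smul_smul]
      rw [mul_inv_cancel₀ ene, one_smul]
    rw [h1, d_smul_l, d_sub_r, d_comm (dT (γ t) n) (V (n + 1)), d_comm (dT (γ t) n) (V n),
      hVnext n, hVself n]
    ring
  have hq : HasDerivAt (fun s => dot3 (γ s (n + 1) - γ s n) (γ s (n + 1) - γ s n)) 0 t := by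
    have hi : ∀ i, HasDerivAt (fun s => (γ s (n + 1) - γ s n) i) ((V (n + 1) - V n) i) t :=
      fun i => (hasDerivAt_pi.mp (hgd n)) i
    have hsum := (((hi 0).mul (hi 0)).add ((hi 1).mul (hi 1))).add ((hi 2).mul (hi 2))
    have hval : (V (n + 1) - V n) 0 * (γ t (n + 1) - γ t n) 0
          + (γ t (n + 1) - γ t n) 0 * (V (n + 1) - V n) 0
        + ((V (n + 1) - V n) 1 * (γ t (n + 1) - γ t n) 1
          + (γ t (n + 1) - γ t n) 1 * (V (n + 1) - V n) 1)
        + ((V (n + 1) - V n) 2 * (γ t (n + 1) - γ t n) 2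
          + (γ t (n + 1) - γ t n) 2 * (V (n + 1) - V n) 2) = 0 := by
      unfold dot3 at hQ0
      linarith [hQ0]
    exact hval ▸ hsum
  have hee : HasDerivAt ε 0 t := by
    have hqt : dot3 (γ t (n + 1) - γ t n) (γ t (n + 1) - γ t n) ≠ 0 := by
      rw [hdot_self n]; positivity
    have h2 := hq.sqrt hqt
    simp only [zero_div] at h2
    have hfun : (fun s => Real.sqrt (dot3 (γ s (n + 1) - γ s n) (γ s (n + 1) - γ s n))) = ε := by
      funext s; rw [← hε s n]; rfl
    rwa [hfun] at h2
  have hεinv : HasDerivAt (fun s => (ε s)⁻¹) 0 t := by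
    have h := hee.fun_inv ene
    simpa only [neg_zero, zero_div] using h
  have hTd : ∀ (m : ℤ) (i : Fin 3),
      HasDerivAt (fun s => dT (γ s) m i) ((ε t)⁻¹ * ((V (m + 1) - V m) i)) t := by
    intro m i
    have hfun : (fun s => dT (γ s) m i) = fun s => (ε s)⁻¹ * ((γ s (m + 1) - γ s m) i) := by
      funext s; unfold dT; rw [hε s m]; rfl
    rw [hfun]
    have h2 := hεinv.fun_mul ((hasDerivAt_pi.mp (hgd m)) i)
    simpa only [zero_mul, zero_add] using h2
  have hTdr : ∀ i : Fin 3,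
      HasDerivAt (fun s => dT (γ s) (n - 1) i) ((ε t)⁻¹ * ((V n - V (n - 1)) i)) t := by
    intro i
    have h := hTd (n - 1) i
    rwa [show n - 1 + 1 = n from by ring] at h
  -- derivative of the inner product of tangents
  have hXd : HasDerivAt (fun s => dot3 (dT (γ s) n) (dT (γ s) (n - 1)))
      ((ε t)⁻¹ * (dot3 (V (n + 1) - V n) (dT (γ t) (n - 1))
        + dot3 (dT (γ t) n) (V n - V (n - 1)))) t := by
    have hprod : ∀ i : Fin 3, HasDerivAt (fun s => dT (γ s) n i * dT (γ s) (n - 1) i)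
        ((ε t)⁻¹ * ((V (n + 1) - V n) i) * dT (γ t) (n - 1) i
          + dT (γ t) n i * ((ε t)⁻¹ * ((V n - V (n - 1)) i))) t :=
      fun i => (hTd n i).mul (hTdr i)
    have hsum := ((hprod 0).add (hprod 1)).add (hprod 2)
    have hval : (ε t)⁻¹ * ((V (n + 1) - V n) 0) * dT (γ t) (n - 1) 0
          + dT (γ t) n 0 * ((ε t)⁻¹ * ((V n - V (n - 1)) 0))
        + ((ε t)⁻¹ * ((V (n + 1) - V n) 1) * dT (γ t) (n - 1) 1
          + dT (γ t) n 1 * ((ε t)⁻¹ * ((V n - V (n - 1)) 1)))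
        + ((ε t)⁻¹ * ((V (n + 1) - V n) 2) * dT (γ t) (n - 1) 2
          + dT (γ t) n 2 * ((ε t)⁻¹ * ((V n - V (n - 1)) 2)))
        = (ε t)⁻¹ * (dot3 (V (n + 1) - V n) (dT (γ t) (n - 1))
          + dot3 (dT (γ t) n) (V n - V (n - 1))) := by
      unfold dot3; ring
    exact hval ▸ hsum
  -- pass to arccos
  have h1 : dot3 (dT (γ t) n) (dT (γ t) (n - 1)) ≠ 1 := by
    rw [hcos n]; intro h; nlinarith [sinpos n, hpy n]
  have h1' : dot3 (dT (γ t) n) (dT (γ t) (n - 1)) ≠ -1 := by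
    rw [hcos n]; intro h; nlinarith [sinpos n, hpy n]
  have harc := (Real.hasDerivAt_arccos h1' h1).comp t hXd
  have hfun2 : (Real.arccos ∘ fun s => dot3 (dT (γ s) n) (dT (γ s) (n - 1)))
      = fun s => κ s n := by
    funext s
    simp only [Function.comp_apply]
    rw [hκcos s n, Real.arccos_cos (hκ s n).1.le (hκ s n).2.le]
  rw [hfun2] at harc
  refine harc.congr_deriv ?_
  rw [d_sub_l, d_sub_r, hVnextprev n, d_comm (dT (γ t) n) (V n),
    d_comm (dT (γ t) n) (V (n - 1)), hVself n, hVprev n]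
  have e2 : dot3 (V n) (dT (γ t) (n - 1)) = ε t / a t * Real.cos (ν t) := by
    have h := hVnext (n - 1)
    rwa [show n - 1 + 1 = n from by ring] at h
  rw [e2, hcos n]
  rw [show 1 - Real.cos (κ t n) ^ 2 = Real.sin (κ t n) ^ 2 from by linear_combination (-1 : ℝ) * hpy n]
  rw [Real.sqrt_sq (sinpos n).le]
  field_simp [sne n]
  ring
end
end

section
/- (Sym-Tafel formula, semi-discrete case) Let a > 0 and let κ_n(t) be a solution of the semi-discrete mKdV equation dκ_n/dt = (1/a)·(tan(κ_{n+1}/2) − tan(κ_{n−1}/2)) with κ_n(t) ∈ (0,π). For each λ ∈ ℝ set ν = 2·arctan(aλ/2), and let φ_n(t,λ) be an SU(2)-valued function, differentiable in t and λ, satisfying φ_{n+1} = φ_n·L_n with L_n = [[e^{−iν/2}cos(κ_{n+1}/2), −e^{−iν/2}sin(κ_{n+1}/2)],[e^{iν/2}sin(κ_{n+1}/2), e^{iν/2}cos(κ_{n+1}/2)]] and dφ_n/dt = φ_n·M_n with M_n = (1/(2a))·[[−i·sin ν, −e^{−iν}tan(κ_n/2) − tan(κ_{n+1}/2)],[e^{iν}tan(κ_n/2)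 + tan(κ_{n+1}/2), i·sin ν]]. Fix λ and set γ_n = f⁻¹(−(∂_λφ_n)·φ_n⁻¹). Then for each t, γ is a discrete space curve such that the distance between contiguous vertices is the constant ε = a/(1 + a²λ²/4), the angle between contiguous tangent vectors T_{n−1}, T_n equals κ_n, and the angle between contiguous binormal vectors B_{n−1}, B_n equals ν. -/
open Matrix

noncomputable section

/-- The matrix L_n of the discrete Frenet–Serret formula, in SU(2) form. -/
def Ldisc (ν k : ℝ) : Matrix (Fin 2) (Fin 2) ℂ :=
  !![Complex.exp (-(Complex.I / 2) * (ν : ℂ)) * ((Real.cos (k / 2) : ℝ) : ℂ),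
       -(Complex.exp (-(Complex.I / 2) * (ν : ℂ)) * ((Real.sin (k / 2) : ℝ) : ℂ));
     Complex.exp ((Complex.I / 2) * (ν : ℂ)) * ((Real.sin (k / 2) : ℝ) : ℂ),
       Complex.exp ((Complex.I / 2) * (ν : ℂ)) * ((Real.cos (k / 2) : ℝ) : ℂ)]

/-- The matrix M_n of the semi-discrete mKdV AKNS pair, with kn = κ_n, kn1 = κ_{n+1}. -/
def Msd (a ν kn kn1 : ℝ) : Matrix (Fin 2) (Fin 2) ℂ :=
  (1 / (2 * (a : ℂ))) •
    !![-(Complex.I * ((Real.sin ν : ℝ) : ℂ)),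
         -(Complex.exp (-(Complex.I) * (ν : ℂ)) * ((Real.tan (kn / 2) : ℝ) : ℂ))
           - ((Real.tan (kn1 / 2) : ℝ) : ℂ);
       Complex.exp (Complex.I * (ν : ℂ)) * ((Real.tan (kn / 2) : ℝ) : ℂ)
           + ((Real.tan (kn1 / 2) : ℝ) : ℂ),
         Complex.I * ((Real.sin ν : ℝ) : ℂ)]

/- ====================  auxiliary algebra  ==================== -/

/-- Scaled rotation of ℝ³ induced by the quaternion `[[q, -conj u],[u, conj q]]`. -/
def Adq (q u : ℂ) (x : Fin 3 → ℝ) : Fin 3 → ℝ :=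
  ![ (Complex.normSq q - Complex.normSq u) * x 0 - 2*(q*u).re * x 1 + 2*(q*u).im * x 2,
     2*(u * (starRingEnd ℂ) q).re * x 0 + ((q^2).re - (u^2).re) * x 1 + ((u^2).im - (q^2).im) * x 2,
     -2*(u * (starRingEnd ℂ) q).im * x 0 + ((q^2).im + (u^2).im) * x 1 + ((q^2).re + (u^2).re) * x 2 ]

def e1v : Fin 3 → ℝ := ![1, 0, 0]

def bwv (w : ℂ) : Fin 3 → ℝ := ![0, -(w^2).im, (w^2).re]

def Amat : Matrix (Fin 2) (Fin 2) ℂ := !![-(Complex.I/2), 0; 0, Complex.I/2]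

lemma adq_dot (q u : ℂ) (x y : Fin 3 → ℝ) :
    dot3 (Adq q u x) (Adq q u y) = (Complex.normSq q + Complex.normSq u)^2 * dot3 x y := by
  obtain ⟨a, b⟩ := q; obtain ⟨c, d⟩ := u
  simp [Adq, dot3, Complex.normSq_apply, Complex.mul_re, Complex.mul_im, pow_two]
  ring

lemma adq_cross (q u : ℂ) (x y : Fin 3 → ℝ) :
    cross3 (Adq q u x) (Adq q u y)
      = (Complex.normSq q + Complex.normSq u) • Adq q u (cross3 x y) := by
  obtain ⟨a, b⟩ := q; obtain ⟨c, d⟩ := u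
  funext i; fin_cases i <;>
      simp [Adq, cross3, Complex.normSq_apply, Complex.mul_re, Complex.mul_im, pow_two] <;>
    ring

lemma adq_comp (q u q₂ u₂ : ℂ) (x : Fin 3 → ℝ) :
    Adq (q * q₂ - (starRingEnd ℂ) u * u₂) (u * q₂ + (starRingEnd ℂ) q * u₂) x
      = Adq q u (Adq q₂ u₂ x) := by
  obtain ⟨a, b⟩ := q; obtain ⟨c, d⟩ := u; obtain ⟨e, f⟩ := q₂; obtain ⟨g, h⟩ := u₂
  funext i; fin_cases i <;>
      simp [Adq, Complex.normSq_apply, Complex.mul_re, Complex.mul_im, pow_two] <;>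
    ring

lemma adq_smul (q u : ℂ) (k : ℝ) (x : Fin 3 → ℝ) :
    Adq q u (k • x) = k • Adq q u x := by
  funext i; fin_cases i <;> · simp [Adq]; ring

section scalars
variable {w : ℂ} {c s : ℝ}

lemma lemS1 (hw : Complex.normSq w = 1) :
    dot3 (Adq (w * (c:ℂ)) ((starRingEnd ℂ) w * (s:ℂ)) e1v) e1v = c^2 - s^2 := by
  obtain ⟨a, b⟩ := w
  simp [Complex.normSq_apply] at hw
  simp [Adq, dot3, e1v, Complex.normSq_apply, Complex.mul_re, Complex.mul_im]
  linear_combination (c^2 - s^2) * hw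

lemma lemS2 :
    cross3 e1v (Adq (w * (c:ℂ)) ((starRingEnd ℂ) w * (s:ℂ)) e1v) = (2*c*s) • bwv w := by
  obtain ⟨a, b⟩ := w
  funext i; fin_cases i <;>
      simp [Adq, cross3, e1v, bwv, Complex.normSq_apply, Complex.mul_re, Complex.mul_im,
        pow_two] <;>
    ring

lemma lemS3 (hw : Complex.normSq w = 1) : dot3 (bwv w) (bwv w) = 1 := by
  obtain ⟨a, b⟩ := w
  simp [Complex.normSq_apply] at hw
  simp [dot3, bwv, Complex.mul_re, Complex.mul_im, pow_two]
  linear_combination (1 + b^2 + a^2) * hw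

lemma lemS4 (hw : Complex.normSq w = 1) (hcs : c^2 + s^2 = 1) :
    dot3 (Adq (w * (c:ℂ)) ((starRingEnd ℂ) w * (s:ℂ)) (bwv w)) (bwv w) = (w^2).re := by
  obtain ⟨a, b⟩ := w
  simp [Complex.normSq_apply] at hw
  simp [Adq, dot3, bwv, Complex.normSq_apply, Complex.mul_re, Complex.mul_im, pow_two]
  linear_combination (1 - s^2 - c^2 - b^2*s^2 - b^2*c^2 - b^4*s^2 - b^4*c^2 + a^2*s^2 + a^2*c^2
    + a^4*s^2 + a^4*c^2) * hw + (-1 + 2*a^2) * hcs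

lemma lemS5 (hw : Complex.normSq w = 1) (hcs : c^2 + s^2 = 1) :
    dot3 (Adq (w * (c:ℂ)) ((starRingEnd ℂ) w * (s:ℂ)) (bwv w))
      (cross3 (bwv w) (Adq (w * (c:ℂ)) ((starRingEnd ℂ) w * (s:ℂ)) e1v)) = -(w^2).im := by
  obtain ⟨a, b⟩ := w
  simp [Complex.normSq_apply] at hw
  simp [Adq, dot3, cross3, e1v, bwv, Complex.normSq_apply, Complex.mul_re, Complex.mul_im,
    pow_two]
  linear_combination (-2*a*b*s^4 - 4*a*b*c^2*s^2 - 2*a*b*c^4 - 2*a*b^3*s^4 - 4*a*b^3*c^2*s^2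
    - 2*a*b^3*c^4 - 2*a*b^5*s^4 - 4*a*b^5*c^2*s^2 - 2*a*b^5*c^4 - 2*a^3*b*s^4 - 4*a^3*b*c^2*s^2
    - 2*a^3*b*c^4 - 4*a^3*b^3*s^4 - 8*a^3*b^3*c^2*s^2 - 4*a^3*b^3*c^4 - 2*a^5*b*s^4
    - 4*a^5*b*c^2*s^2 - 2*a^5*b*c^4) * hw + (-2*a*b - 2*a*b*s^2 - 2*a*b*c^2) * hcs

end scalars

lemma dot3_smul_left (k : ℝ) (x y : Fin 3 → ℝ) : dot3 (k • x) y = k * dot3 x y := by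
  simp [dot3]; ring
lemma dot3_smul_right (k : ℝ) (x y : Fin 3 → ℝ) : dot3 x (k • y) = k * dot3 x y := by
  simp [dot3]; ring
lemma cross3_smul_smul (k l : ℝ) (x y : Fin 3 → ℝ) :
    cross3 (k • x) (l • y) = (k*l) • cross3 x y := by
  funext i; fin_cases i <;> · simp [cross3]; ring
lemma cross3_self_smul (k l : ℝ) (v : Fin 3 → ℝ) : cross3 (k • v) (l • v) = 0 := by
  funext i; fin_cases i <;> · simp [cross3]; ring
lemma norm3_eq (x : Fin 3 → ℝ) (k : ℝ) (hk : 0 ≤ k) (h : dot3 x x = k^2) : norm3 x = k := by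
  rw [norm3, h, Real.sqrt_sq hk]
lemma dot3_zero : dot3 (0 : Fin 3 → ℝ) 0 = 0 := by simp [dot3]
lemma dot3_e1v : dot3 e1v e1v = 1 := by simp [dot3, e1v]

/- ====================  main theorem  ==================== -/

/-- (Sym–Tafel formula, semi-discrete case.)  For a > 0, a solution κ_n(t) of the
semi-discrete mKdV equation, and an SU(2)-valued solution φ_n(t,λ) of the linear
problem, the curve γ_n = f⁻¹(−(∂_λφ_n)φ_n⁻¹) (at fixed λ) is, for each t, a discrete
space curve with constant segment length ε = a/(1+a²λ²/4), tangent angles κ_n and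
binormal angles ν = 2 arctan(aλ/2). -/
theorem statement11 (a lam : ℝ) (ha : 0 < a) (κ : ℝ → ℤ → ℝ)
    (hκ : ∀ t n, κ t n ∈ Set.Ioo 0 Real.pi)
    (hmkdv : ∀ t n, HasDerivAt (fun s => κ s n)
      ((1 / a) * (Real.tan (κ t (n + 1) / 2) - Real.tan (κ t (n - 1) / 2))) t)
    (φ φl : ℝ → ℝ → ℤ → Matrix (Fin 2) (Fin 2) ℂ)
    (hsu : ∀ t l n, (φ t l n)ᴴ * φ t l n = 1 ∧ (φ t l n).det = 1)
    (hrec : ∀ t l n, φ t l (n + 1) =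
      φ t l n * Ldisc (2 * Real.arctan (a * l / 2)) (κ t (n + 1)))
    (ht : ∀ t l n, ∀ i j, HasDerivAt (fun s => φ s l n i j)
      ((φ t l n * Msd a (2 * Real.arctan (a * l / 2)) (κ t n) (κ t (n + 1))) i j) t)
    (hl : ∀ t l n, ∀ i j, HasDerivAt (fun u => φ t u n i j) (φl t l n i j) l)
    (S : ℝ → ℤ → Matrix (Fin 2) (Fin 2) ℂ)
    (hS : ∀ t n, S t n = -(φl t lam n * (φ t lam n)⁻¹))
    (γ : ℝ → ℤ → Fin 3 → ℝ)
    (hγ : ∀ t n, γ t n = ![2 * (S t n 0 0).im, 2 * (S t n 1 0).im, 2 * (S t n 1 0).re]) :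
    (∀ t n, ¬ Collinear ℝ ({γ t (n - 1), γ t n, γ t (n + 1)} : Set (Fin 3 → ℝ))) ∧
    (∀ t n, norm3 (γ t (n + 1) - γ t n) = a / (1 + a ^ 2 * lam ^ 2 / 4)) ∧
    (∀ t n, dot3 (dT (γ t) n) (dT (γ t) (n - 1)) = Real.cos (κ t n)) ∧
    (∀ t n, dot3 (dB (γ t) n) (dB (γ t) (n - 1)) = Real.cos (2 * Real.arctan (a * lam / 2)) ∧
            dot3 (dB (γ t) n) (dN (γ t) (n - 1)) = Real.sin (2 * Real.arctan (a * lam / 2))) := by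
  have hden : (0:ℝ) < 1 + a ^ 2 * lam ^ 2 / 4 := by positivity
  set ε : ℝ := a / (1 + a ^ 2 * lam ^ 2 / 4) with hε_def
  have hε : 0 < ε := div_pos ha hden
  set w : ℂ := Complex.exp (-(Complex.I / 2) * ((2 * Real.arctan (a * lam / 2) : ℝ) : ℂ))
    with hw_def
  -- basic facts about w
  have hconjw : Complex.exp ((Complex.I / 2) * ((2 * Real.arctan (a * lam / 2) : ℝ) : ℂ))
      = (starRingEnd ℂ) w := by
    rw [hw_def, ← Complex.exp_conj]
    congr 1
    rw [_root_.map_mul, map_neg, _root_.map_div₀, Complex.conj_I, Complex.conj_ofReal, map_ofNat]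
    ring
  have hnwC : w * (starRingEnd ℂ) w = 1 := by
    rw [← hconjw, hw_def, ← Complex.exp_add,
      show -(Complex.I/2) * ((2 * Real.arctan (a * lam / 2) : ℝ) : ℂ)
          + (Complex.I/2) * ((2 * Real.arctan (a * lam / 2) : ℝ) : ℂ) = 0 from by ring,
      Complex.exp_zero]
  have hnw : Complex.normSq w = 1 := by
    have h := hnwC
    rw [Complex.mul_conj] at h
    exact_mod_cast h
  have hw2 : w^2 = Complex.exp (((-(2 * Real.arctan (a * lam / 2)) : ℝ) : ℂ) * Complex.I) := by
    rw [hw_def, sq, ← Complex.exp_add]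
    congr 1
    push_cast
    ring
  have hw2re : (w^2).re = Real.cos (2 * Real.arctan (a * lam / 2)) := by
    rw [hw2, Complex.exp_ofReal_mul_I_re, Real.cos_neg]
  have hw2im : (w^2).im = -Real.sin (2 * Real.arctan (a * lam / 2)) := by
    rw [hw2, Complex.exp_ofReal_mul_I_im, Real.sin_neg]
  -- SU(2) structure of φ
  have hinv : ∀ t l n, (φ t l n)⁻¹ = (φ t l n)ᴴ :=
    fun t l n => Matrix.inv_eq_left_inv (hsu t l n).1
  have hadj : ∀ t l n, (φ t l n)ᴴ = (φ t l n).adjugate := by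
    intro t l n
    rw [← hinv t l n]
    exact Matrix.inv_eq_left_inv (by rw [Matrix.adjugate_mul, (hsu t l n).2, one_smul])
  have h11 : ∀ t l n, φ t l n 1 1 = (starRingEnd ℂ) (φ t l n 0 0) := by
    intro t l n
    have h2 : (φ t l n)ᴴ 0 0 = (φ t l n) 1 1 := by rw [hadj t l n, Matrix.adjugate_fin_two]; simp
    simpa [Matrix.conjTranspose_apply, Complex.star_def] using h2.symm
  have h01 : ∀ t l n, φ t l n 0 1 = -((starRingEnd ℂ) (φ t l n 1 0)) := by
    intro t l n
    have h2 : (φ t l n)ᴴ 0 1 = -(φ t l n) 0 1 := by rw [hadj t l n, Matrix.adjugate_fin_two]; simp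
    rw [Matrix.conjTranspose_apply, Complex.star_def] at h2
    rw [eq_neg_iff_add_eq_zero] at h2 ⊢
    linear_combination h2
  have hnorm1 : ∀ t l n,
      Complex.normSq (φ t l n 0 0) + Complex.normSq (φ t l n 1 0) = 1 := by
    intro t l n
    have hdet := (hsu t l n).2
    rw [Matrix.det_fin_two, h11 t l n, h01 t l n] at hdet
    have h : ((Complex.normSq (φ t l n 0 0) + Complex.normSq (φ t l n 1 0) : ℝ) : ℂ) = 1 := by
      push_cast [← Complex.mul_conj]
      linear_combination hdet
    exact_mod_cast h
  -- derivative of the Frenet matrix in λ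
  have hνl : HasDerivAt (fun l : ℝ => 2 * Real.arctan (a * l / 2)) ε lam := by
    have h1 : HasDerivAt (fun l : ℝ => a * l / 2) (a * 1 / 2) lam :=
      ((hasDerivAt_id lam).const_mul a).div_const 2
    have h2 := (h1.arctan).const_mul 2
    refine h2.congr_deriv ?_
    rw [hε_def]
    have d1 : (1 + a ^ 2 * lam ^ 2 / 4) ≠ 0 := by positivity
    have d2 : (1 + (a * lam / 2) ^ 2) ≠ 0 := by positivity
    field_simp
    ring
  have hνC : HasDerivAt (fun l : ℝ => ((2 * Real.arctan (a * l / 2) : ℝ) : ℂ)) (ε:ℂ) lam :=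
    hνl.ofReal_comp
  have hexpm : HasDerivAt
      (fun l : ℝ => Complex.exp (-(Complex.I / 2) * ((2 * Real.arctan (a * l / 2) : ℝ) : ℂ)))
      (w * (-(Complex.I / 2) * (ε:ℂ))) lam := by
    have h := (hνC.const_mul (-(Complex.I / 2))).cexp
    rw [← hw_def] at h
    exact h
  have hexpp : HasDerivAt
      (fun l : ℝ => Complex.exp ((Complex.I / 2) * ((2 * Real.arctan (a * l / 2) : ℝ) : ℂ)))
      ((starRingEnd ℂ) w * ((Complex.I / 2) * (ε:ℂ))) lam := by
    have h := (hνC.const_mul ((Complex.I / 2))).cexp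
    rw [hconjw] at h
    exact h
  have hLd : ∀ (k : ℝ) (i j : Fin 2), HasDerivAt
      (fun l : ℝ => Ldisc (2 * Real.arctan (a * l / 2)) k i j)
      (((ε:ℂ) • (Amat * Ldisc (2 * Real.arctan (a * lam / 2)) k)) i j) lam := by
    intro k i j
    fin_cases i <;> fin_cases j <;>
      simp only [Ldisc, Amat, Matrix.smul_apply, Matrix.mul_apply, Fin.sum_univ_two,
        Matrix.cons_val', Matrix.cons_val_zero, Matrix.cons_val_one, Matrix.head_cons,
        Matrix.head_fin_const, Matrix.empty_val', Matrix.cons_val_fin_one, Matrix.of_apply,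
        Fin.isValue, Fin.mk_zero, Fin.mk_one, zero_mul, add_zero, mul_zero, zero_add,
        smul_eq_mul]
    · rw [← hw_def]
      refine (hexpm.mul_const ((Real.cos (k / 2) : ℝ) : ℂ)).congr_deriv ?_
      ring
    · rw [← hw_def]
      refine (hexpm.mul_const ((Real.sin (k / 2) : ℝ) : ℂ)).neg.congr_deriv ?_
      ring
    · rw [hconjw]
      refine (hexpp.mul_const ((Real.sin (k / 2) : ℝ) : ℂ)).congr_deriv ?_
      ring
    · rw [hconjw]
      refine (hexpp.mul_const ((Real.cos (k / 2) : ℝ) : ℂ)).congr_deriv ?_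
      ring
  -- recursion for φl
  have hφlrec : ∀ t n, φl t lam (n+1) =
      φl t lam n * Ldisc (2 * Real.arctan (a * lam / 2)) (κ t (n+1))
        + φ t lam n * ((ε:ℂ) • (Amat * Ldisc (2 * Real.arctan (a * lam / 2)) (κ t (n+1)))) := by
    intro t n
    ext i j
    have hfun : (fun l : ℝ => φ t l (n+1) i j) = (fun l : ℝ =>
        φ t l n i 0 * Ldisc (2 * Real.arctan (a * l / 2)) (κ t (n+1)) 0 j
          + φ t l n i 1 * Ldisc (2 * Real.arctan (a * l / 2)) (κ t (n+1)) 1 j) := by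
      funext l
      rw [hrec t l n, Matrix.mul_apply, Fin.sum_univ_two]
    have h3 : HasDerivAt (fun l : ℝ =>
        φ t l n i 0 * Ldisc (2 * Real.arctan (a * l / 2)) (κ t (n+1)) 0 j
          + φ t l n i 1 * Ldisc (2 * Real.arctan (a * l / 2)) (κ t (n+1)) 1 j)
        (φl t lam n i 0 * Ldisc (2 * Real.arctan (a * lam / 2)) (κ t (n+1)) 0 j
          + φ t lam n i 0 * (((ε:ℂ) • (Amat * Ldisc (2 * Real.arctan (a * lam / 2)) (κ t (n+1)))) 0 j)
          + (φl t lam n i 1 * Ldisc (2 * Real.arctan (a * lam / 2)) (κ t (n+1)) 1 j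
          + φ t lam n i 1 * (((ε:ℂ) • (Amat * Ldisc (2 * Real.arctan (a * lam / 2)) (κ t (n+1)))) 1 j)))
        lam :=
      ((hl t lam n i 0).mul (hLd (κ t (n+1)) 0 j)).add
        ((hl t lam n i 1).mul (hLd (κ t (n+1)) 1 j))
    rw [← hfun] at h3
    have h4 := (hl t lam (n+1) i j).unique h3
    rw [Matrix.add_apply, Matrix.mul_apply, Matrix.mul_apply, Fin.sum_univ_two,
      Fin.sum_univ_two, h4]
    ring
  -- unitarity of L
  have hLL : ∀ t n, Ldisc (2 * Real.arctan (a * lam / 2)) (κ t (n+1))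
      * (Ldisc (2 * Real.arctan (a * lam / 2)) (κ t (n+1)))ᴴ = 1 := by
    intro t n
    apply _root_.mul_eq_one_comm.mp
    have h1 := (hsu t lam (n+1)).1
    rw [hrec t lam n, Matrix.conjTranspose_mul] at h1
    calc (Ldisc (2 * Real.arctan (a * lam / 2)) (κ t (n+1)))ᴴ
          * Ldisc (2 * Real.arctan (a * lam / 2)) (κ t (n+1))
        = ((Ldisc (2 * Real.arctan (a * lam / 2)) (κ t (n+1)))ᴴ * (φ t lam n)ᴴ)
          * (φ t lam n * Ldisc (2 * Real.arctan (a * lam / 2)) (κ t (n+1))) := by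
          rw [Matrix.mul_assoc, ← Matrix.mul_assoc ((φ t lam n)ᴴ), (hsu t lam n).1,
            Matrix.one_mul]
      _ = 1 := h1
  -- the Sym–Tafel difference formula
  have hSd : ∀ t n, S t (n+1) - S t n
      = -((ε:ℂ) • (φ t lam n * Amat * (φ t lam n)ᴴ)) := by
    intro t n
    rw [hS, hS, hinv, hinv, hrec t lam n, hφlrec t n, Matrix.conjTranspose_mul]
    have e1 : (φl t lam n * Ldisc (2 * Real.arctan (a * lam / 2)) (κ t (n+1)))
        * ((Ldisc (2 * Real.arctan (a * lam / 2)) (κ t (n+1)))ᴴ * (φ t lam n)ᴴ)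
        = φl t lam n * (φ t lam n)ᴴ := by
      rw [Matrix.mul_assoc,
        ← Matrix.mul_assoc (Ldisc (2 * Real.arctan (a * lam / 2)) (κ t (n+1))),
        hLL t n, Matrix.one_mul]
    have e2 : (φ t lam n * ((ε:ℂ) • (Amat * Ldisc (2 * Real.arctan (a * lam / 2)) (κ t (n+1)))))
        * ((Ldisc (2 * Real.arctan (a * lam / 2)) (κ t (n+1)))ᴴ * (φ t lam n)ᴴ)
        = (ε:ℂ) • (φ t lam n * Amat * (φ t lam n)ᴴ) := by
      rw [mul_smul_comm, Matrix.smul_mul]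
      congr 1
      rw [Matrix.mul_assoc (φ t lam n), Matrix.mul_assoc (φ t lam n), Matrix.mul_assoc Amat,
        ← Matrix.mul_assoc (Ldisc (2 * Real.arctan (a * lam / 2)) (κ t (n+1))), hLL t n,
        Matrix.one_mul]
    rw [Matrix.add_mul, e1, e2]
    abel
  -- γ difference formula
  have hγd : ∀ t n, γ t (n+1) - γ t n
      = ε • Adq (φ t lam n 0 0) (φ t lam n 1 0) e1v := by
    intro t n
    have h00 : S t (n+1) 0 0 - S t n 0 0
        = Complex.I * ((ε * (Complex.normSq (φ t lam n 0 0)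
            - Complex.normSq (φ t lam n 1 0)) / 2 : ℝ) : ℂ) := by
      have h : S t (n+1) 0 0 - S t n 0 0
          = (-((ε:ℂ) • (φ t lam n * Amat * (φ t lam n)ᴴ))) 0 0 := by
        rw [← hSd t n, Matrix.sub_apply]
      rw [h]
      simp only [Matrix.neg_apply, Matrix.smul_apply, Matrix.mul_apply, Fin.sum_univ_two,
        Matrix.conjTranspose_apply, Complex.star_def, Amat, Matrix.cons_val', Matrix.cons_val_zero,
        Matrix.cons_val_one, Matrix.head_cons, Matrix.head_fin_const, Matrix.empty_val',
        Matrix.cons_val_fin_one, Matrix.of_apply, Fin.isValue, Fin.mk_zero, Fin.mk_one,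
        smul_eq_mul, h01 t lam n, map_neg, Complex.conj_conj]
      push_cast [← Complex.mul_conj]
      ring
    have h10 : S t (n+1) 1 0 - S t n 1 0
        = Complex.I * (ε:ℂ) * (φ t lam n 1 0 * (starRingEnd ℂ) (φ t lam n 0 0)) := by
      have h : S t (n+1) 1 0 - S t n 1 0
          = (-((ε:ℂ) • (φ t lam n * Amat * (φ t lam n)ᴴ))) 1 0 := by
        rw [← hSd t n, Matrix.sub_apply]
      rw [h]
      simp only [Matrix.neg_apply, Matrix.smul_apply, Matrix.mul_apply, Fin.sum_univ_two,
        Matrix.conjTranspose_apply, Complex.star_def, Amat, Matrix.cons_val', Matrix.cons_val_zero,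
        Matrix.cons_val_one, Matrix.head_cons, Matrix.head_fin_const, Matrix.empty_val',
        Matrix.cons_val_fin_one, Matrix.of_apply, Fin.isValue, Fin.mk_zero, Fin.mk_one,
        smul_eq_mul, h11 t lam n, h01 t lam n, map_neg, Complex.conj_conj]
      ring
    have e00 : (S t (n+1) 0 0).im - (S t n 0 0).im
        = ε * (Complex.normSq (φ t lam n 0 0) - Complex.normSq (φ t lam n 1 0)) / 2 := by
      have h := congrArg Complex.im h00
      rw [Complex.sub_im] at h
      rw [h]
      simp
    have e10i : (S t (n+1) 1 0).im - (S t n 1 0).im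
        = ε * (φ t lam n 1 0 * (starRingEnd ℂ) (φ t lam n 0 0)).re := by
      have h := congrArg Complex.im h10
      rw [Complex.sub_im] at h
      rw [h]
      simp [Complex.mul_im, Complex.mul_re]
    have e10r : (S t (n+1) 1 0).re - (S t n 1 0).re
        = -(ε * (φ t lam n 1 0 * (starRingEnd ℂ) (φ t lam n 0 0)).im) := by
      have h := congrArg Complex.re h10
      rw [Complex.sub_re] at h
      rw [h]
      simp [Complex.mul_im, Complex.mul_re]
    simp only [Complex.mul_re, Complex.mul_im, Complex.conj_re, Complex.conj_im] at e10i e10r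
    funext i
    fin_cases i
    · show γ t (n+1) 0 - γ t n 0 = _
      rw [hγ t (n+1), hγ t n]
      simp only [Pi.smul_apply, smul_eq_mul, Adq, e1v, Matrix.cons_val_zero]
      simp
      linarith [e00]
    · show γ t (n+1) 1 - γ t n 1 = _
      rw [hγ t (n+1), hγ t n]
      simp only [Pi.smul_apply, smul_eq_mul, Adq, e1v, Matrix.cons_val_one, Matrix.head_cons]
      simp
      linarith [e10i]
    · show γ t (n+1) 2 - γ t n 2 = _
      rw [hγ t (n+1), hγ t n]
      simp only [Pi.smul_apply, smul_eq_mul, Adq, e1v]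
      simp
      linarith [e10r]
  -- tangent vectors
  have hdot3γ : ∀ t n, dot3 (γ t (n+1) - γ t n) (γ t (n+1) - γ t n) = ε^2 := by
    intro t n
    rw [hγd t n, dot3_smul_left, dot3_smul_right, adq_dot, hnorm1 t lam n, dot3_e1v]
    ring
  have hlen : ∀ t n, norm3 (γ t (n+1) - γ t n) = ε :=
    fun t n => norm3_eq _ _ hε.le (hdot3γ t n)
  have hdT : ∀ t n, dT (γ t) n = Adq (φ t lam n 0 0) (φ t lam n 1 0) e1v := by
    intro t n
    rw [dT, hlen t n, hγd t n, smul_smul, inv_mul_cancel₀ hε.ne', one_smul]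
  -- step relation between consecutive frames
  have hstep : ∀ t n,
      φ t lam n 0 0 = φ t lam (n-1) 0 0 * (w * ((Real.cos (κ t n / 2) : ℝ) : ℂ))
          - (starRingEnd ℂ) (φ t lam (n-1) 1 0)
            * ((starRingEnd ℂ) w * ((Real.sin (κ t n / 2) : ℝ) : ℂ))
        ∧ φ t lam n 1 0 = φ t lam (n-1) 1 0 * (w * ((Real.cos (κ t n / 2) : ℝ) : ℂ))
          + (starRingEnd ℂ) (φ t lam (n-1) 0 0)
            * ((starRingEnd ℂ) w * ((Real.sin (κ t n / 2) : ℝ) : ℂ)) := by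
    intro t n
    have h := hrec t lam (n-1)
    rw [show (n:ℤ) - 1 + 1 = n from by ring] at h
    constructor
    · rw [h, Matrix.mul_apply, Fin.sum_univ_two, h01 t lam (n-1)]
      simp only [Ldisc, ← hw_def, hconjw, Matrix.cons_val', Matrix.cons_val_zero,
        Matrix.cons_val_one, Matrix.head_cons, Matrix.head_fin_const, Matrix.empty_val',
        Matrix.cons_val_fin_one, Matrix.of_apply, Fin.isValue]
      ring
    · rw [h, Matrix.mul_apply, Fin.sum_univ_two, h11 t lam (n-1)]
      simp only [Ldisc, ← hw_def, hconjw, Matrix.cons_val', Matrix.cons_val_zero,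
        Matrix.cons_val_one, Matrix.head_cons, Matrix.head_fin_const, Matrix.empty_val',
        Matrix.cons_val_fin_one, Matrix.of_apply, Fin.isValue]
  -- trigonometry
  have hcs : ∀ t n, Real.cos (κ t n / 2)^2 + Real.sin (κ t n / 2)^2 = 1 := by
    intro t n; rw [add_comm]; exact Real.sin_sq_add_cos_sq _
  have hcpos : ∀ t n, 0 < Real.cos (κ t n / 2) := by
    intro t n
    apply Real.cos_pos_of_mem_Ioo
    constructor
    · have := Real.pi_pos
      have := (hκ t n).1
      linarith
    · have := (hκ t n).2
      linarith
  have hspos : ∀ t n, 0 < Real.sin (κ t n / 2) := by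
    intro t n
    apply Real.sin_pos_of_pos_of_lt_pi
    · have := (hκ t n).1; linarith
    · have := Real.pi_pos
      have := (hκ t n).2
      linarith
  -- tangent in the previous frame
  have hdTstep : ∀ t n, dT (γ t) n
      = Adq (φ t lam (n-1) 0 0) (φ t lam (n-1) 1 0)
          (Adq (w * ((Real.cos (κ t n / 2) : ℝ) : ℂ))
            ((starRingEnd ℂ) w * ((Real.sin (κ t n / 2) : ℝ) : ℂ)) e1v) := by
    intro t n
    rw [hdT t n, (hstep t n).1, (hstep t n).2, adq_comp]
  -- cross product of consecutive tangents
  have hcrossT : ∀ t n, cross3 (dT (γ t) (n-1)) (dT (γ t) n)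
      = (2 * Real.cos (κ t n / 2) * Real.sin (κ t n / 2))
          • Adq (φ t lam (n-1) 0 0) (φ t lam (n-1) 1 0) (bwv w) := by
    intro t n
    rw [hdTstep t n, hdT t (n-1), adq_cross, hnorm1 t lam (n-1), one_smul, lemS2, adq_smul]
  have hdB : ∀ t n, dB (γ t) n = Adq (φ t lam (n-1) 0 0) (φ t lam (n-1) 1 0) (bwv w) := by
    intro t n
    have hpos : 0 < 2 * Real.cos (κ t n / 2) * Real.sin (κ t n / 2) :=
      mul_pos (mul_pos two_pos (hcpos t n)) (hspos t n)
    have hcn : norm3 (cross3 (dT (γ t) (n-1)) (dT (γ t) n))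
        = 2 * Real.cos (κ t n / 2) * Real.sin (κ t n / 2) := by
      apply norm3_eq _ _ hpos.le
      rw [hcrossT t n, dot3_smul_left, dot3_smul_right, adq_dot, hnorm1 t lam (n-1), lemS3 hnw]
      ring
    rw [dB, hcn, hcrossT t n, smul_smul, inv_mul_cancel₀ hpos.ne', one_smul]
  refine ⟨?_, fun t n => hlen t n, ?_, ?_⟩
  · -- non-collinearity
    intro t n hcol
    obtain ⟨v, hv⟩ := (collinear_iff_of_mem (Set.mem_insert _ _)).mp hcol
    obtain ⟨rb, hb⟩ := hv (γ t n) (by simp)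
    obtain ⟨rc, hc⟩ := hv (γ t (n+1)) (by simp)
    have hBA : γ t n - γ t (n-1) = rb • v := by
      rw [hb, vadd_eq_add, add_sub_cancel_right]
    have hCB : γ t (n+1) - γ t n = (rc - rb) • v := by
      rw [hb, hc, vadd_eq_add, vadd_eq_add, sub_smul]
      abel
    have h0 : cross3 (γ t n - γ t (n-1)) (γ t (n+1) - γ t n) = 0 := by
      rw [hBA, hCB, cross3_self_smul]
    have h1 : cross3 (γ t n - γ t (n-1)) (γ t (n+1) - γ t n)
        = (ε * ε) • ((2 * Real.cos (κ t n / 2) * Real.sin (κ t n / 2))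
            • Adq (φ t lam (n-1) 0 0) (φ t lam (n-1) 1 0) (bwv w)) := by
      have hA := hγd t (n-1)
      rw [show (n:ℤ) - 1 + 1 = n from by ring] at hA
      rw [hA, hγd t n, cross3_smul_smul, (hstep t n).1, (hstep t n).2, adq_comp, adq_cross,
        hnorm1 t lam (n-1), one_smul, lemS2, adq_smul]
    have h2 : dot3 (cross3 (γ t n - γ t (n-1)) (γ t (n+1) - γ t n))
        (cross3 (γ t n - γ t (n-1)) (γ t (n+1) - γ t n))
        = (ε * ε * (2 * Real.cos (κ t n / 2) * Real.sin (κ t n / 2)))^2 := by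
      rw [h1, dot3_smul_left, dot3_smul_right, dot3_smul_left, dot3_smul_right, adq_dot,
        hnorm1 t lam (n-1), lemS3 hnw]
      ring
    rw [h0, dot3_zero] at h2
    have hgt : 0 < (ε * ε * (2 * Real.cos (κ t n / 2) * Real.sin (κ t n / 2)))^2 := by
      have h3 := hcpos t n
      have h4 := hspos t n
      positivity
    linarith
  · -- tangent angle
    intro t n
    rw [hdTstep t n, hdT t (n-1), adq_dot, hnorm1 t lam (n-1), lemS1 hnw]
    have hc2 : Real.cos (κ t n) = 2 * Real.cos (κ t n / 2)^2 - 1 := by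
      rw [← Real.cos_two_mul]
      congr 1
      ring
    rw [hc2]
    linear_combination (-1 : ℝ) * Real.sin_sq_add_cos_sq (κ t n / 2)
  · -- binormal angles
    intro t n
    constructor
    · rw [hdB t n, hdB t (n-1), (hstep t (n-1)).1, (hstep t (n-1)).2, adq_comp, adq_dot,
        hnorm1 t lam (n-1-1), lemS4 hnw (hcs t (n-1)), hw2re]
      ring
    · rw [hdB t n, (hstep t (n-1)).1, (hstep t (n-1)).2, adq_comp, dN, hdB t (n-1),
        hdTstep t (n-1), adq_cross, hnorm1 t lam (n-1-1), one_smul, adq_dot,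
        hnorm1 t lam (n-1-1), lemS5 hnw (hcs t (n-1)), hw2im]
      ring

end
end
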